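/- Let (L^Δ k)(η) be defined by (L^Δ k)(η) = ∑_{y∈η} ∫ a(x−y) e(τ_y; (η∖y)∪x) (Q_y k)((η∖y)∪x) dx − ∑_{x∈η} ∫ a(x−y) e(τ_y; η) (Q_y k)(η) dy, with a ≥ 0, ∫a = α, 0 ≤ τ_y ≤ 1, and |(Q_y k)(η)| ≤ ‖k‖_{ϑ''} e^{ϑ''|η|} exp(⟨φ⟩ e^{ϑ''}). Then |(L^Δ k)(η)| ≤ 2α·‖k‖_{ϑ''}·|η|·e^{ϑ''|η|}·exp(⟨φ⟩ e^{ϑ''}), and consequently for ϑ > ϑ'', ‖L^Δ k‖_ϑ := ess sup_η |(L^Δ k)(η)| e^{−ϑ|η|} ≤ (2α‖k‖_{ϑ''}/(e(ϑ−ϑ''))) · exp(⟨φ⟩ e^{ϑ''}). -/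

import Mathlib

open MeasureTheory

theorem LDelta_bound {d : ℕ} (a : (Fin d → ℝ) → ℝ) (ha : ∀ x, 0 ≤ a x)
    (hint : Integrable a) (α : ℝ) (hα : ∫ x, a x = α)
    (τ : (Fin d → ℝ) → Finset (Fin d → ℝ) → ℝ)
    (hτ : ∀ y η, 0 ≤ τ y η ∧ τ y η ≤ 1)
    (Q : (Fin d → ℝ) → Finset (Fin d → ℝ) → ℝ)
    (nk ϑ'' phibar : ℝ) (hphibar : 0 ≤ phibar)
    (hQ : ∀ (y : Fin d → ℝ) (η : Finset (Fin d → ℝ)),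
      |Q y η| ≤ nk * Real.exp (ϑ'' * η.card) * Real.exp (phibar * Real.exp ϑ''))
    (Lk : Finset (Fin d → ℝ) → ℝ)
    (hLk : ∀ η : Finset (Fin d → ℝ), Lk η =
      (∑ y ∈ η, ∫ x, a (x - y) * τ y (insert x (η.erase y)) * Q y (insert x (η.erase y)))
      - ∑ x ∈ η, ∫ y, a (x - y) * τ y η * Q y η) :
    (∀ η : Finset (Fin d → ℝ),
      |Lk η| ≤ 2 * α * nk * η.card * Real.exp (ϑ'' * η.card) *
        Real.exp (phibar * Real.exp ϑ'')) ∧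
    (∀ ϑ : ℝ, ϑ'' < ϑ →
      (⨆ η : Finset (Fin d → ℝ), |Lk η| * Real.exp (-(ϑ * η.card)))
        ≤ (2 * α * nk / (Real.exp 1 * (ϑ - ϑ''))) * Real.exp (phibar * Real.exp ϑ'')) := by
  -- basic positivity facts
  have hα0 : 0 ≤ α := by
    rw [← hα]; exact integral_nonneg ha
  have hnk0 : 0 ≤ nk := by
    have h := hQ 0 ∅
    have h0 : (0:ℝ) ≤ nk * Real.exp (ϑ'' * (∅ : Finset (Fin d → ℝ)).card) *
        Real.exp (phibar * Real.exp ϑ'') := le_trans (abs_nonneg _) h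
    by_contra hneg
    push_neg at hneg
    have h1 : nk * Real.exp (ϑ'' * ((∅ : Finset (Fin d → ℝ)).card : ℝ)) *
        Real.exp (phibar * Real.exp ϑ'') < 0 :=
      mul_neg_of_neg_of_pos (mul_neg_of_neg_of_pos hneg (Real.exp_pos _)) (Real.exp_pos _)
    exact absurd h0 (not_le.2 h1)
  set E : ℝ := Real.exp (phibar * Real.exp ϑ'') with hE
  have hEpos : 0 < E := Real.exp_pos _
  -- bound for each term of the first sum
  have key1 : ∀ (η : Finset (Fin d → ℝ)) (y : Fin d → ℝ), y ∈ η →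
      |∫ x, a (x - y) * τ y (insert x (η.erase y)) * Q y (insert x (η.erase y))|
        ≤ α * (nk * Real.exp (ϑ'' * η.card) * E) := by
    intro η y hy
    set C : ℝ := nk * Real.exp (ϑ'' * η.card) * E with hC
    have hC0 : 0 ≤ C := by positivity
    have hgint : Integrable (fun x => a (x - y) * C) := (hint.comp_sub_right y).mul_const C
    have hae : ∀ᵐ x : (Fin d → ℝ), x ∉ (η.erase y : Finset (Fin d → ℝ)) := by
      rcases Nat.eq_zero_or_pos d with hd | hd
      · subst hd
        filter_upwards with x hx
        exact Finset.ne_of_mem_erase hx (Subsingleton.elim x y)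
      · haveI : Nonempty (Fin d) := ⟨⟨0, hd⟩⟩
        have hz : volume ((η.erase y : Finset (Fin d → ℝ)) : Set (Fin d → ℝ)) = 0 :=
          (Finset.finite_toSet _).measure_zero _
        rw [ae_iff]
        have hset : {x : Fin d → ℝ | ¬ x ∉ η.erase y} = ↑(η.erase y) := by
          ext x; simp [and_comm]
        rw [hset]; exact hz
    have hbound : ∀ᵐ x : (Fin d → ℝ),
        ‖a (x - y) * τ y (insert x (η.erase y)) * Q y (insert x (η.erase y))‖
          ≤ a (x - y) * C := by
      filter_upwards [hae] with x hx
      have hcard : ((insert x (η.erase y)).card : ℝ) = (η.card : ℝ) := by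
        rw [Finset.card_insert_of_notMem hx, Finset.card_erase_of_mem hy]
        have : 1 ≤ η.card := Finset.card_pos.2 ⟨y, hy⟩
        push_cast [Nat.sub_add_cancel this]
        ring
      have hQb : |Q y (insert x (η.erase y))| ≤ C := by
        calc |Q y (insert x (η.erase y))|
            ≤ nk * Real.exp (ϑ'' * (insert x (η.erase y)).card) * E := hQ _ _
          _ = C := by rw [hcard]
      have hτ1 := (hτ y (insert x (η.erase y))).1
      have hτ2 := (hτ y (insert x (η.erase y))).2
      rw [Real.norm_eq_abs, abs_mul, abs_mul, abs_of_nonneg (ha _), abs_of_nonneg hτ1]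
      calc a (x - y) * τ y (insert x (η.erase y)) * |Q y (insert x (η.erase y))|
          ≤ a (x - y) * 1 * C := by
            exact mul_le_mul (mul_le_mul_of_nonneg_left hτ2 (ha _)) hQb (abs_nonneg _)
              (mul_nonneg (ha _) zero_le_one)
        _ = a (x - y) * C := by ring
    have := norm_integral_le_of_norm_le hgint hbound
    rw [Real.norm_eq_abs] at this
    calc |∫ x, a (x - y) * τ y (insert x (η.erase y)) * Q y (insert x (η.erase y))|
        ≤ ∫ x, a (x - y) * C := this
      _ = (∫ x, a (x - y)) * C := by rw [integral_mul_const]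
      _ = α * C := by rw [integral_sub_right_eq_self a y, hα]
  -- bound for each term of the second sum
  have key2 : ∀ (η : Finset (Fin d → ℝ)) (x : Fin d → ℝ),
      |∫ y, a (x - y) * τ y η * Q y η| ≤ α * (nk * Real.exp (ϑ'' * η.card) * E) := by
    intro η x
    set C : ℝ := nk * Real.exp (ϑ'' * η.card) * E with hC
    have hC0 : 0 ≤ C := by positivity
    have hgint : Integrable (fun y => a (x - y) * C) := by
      have : Integrable (fun y => a (x - y)) := by
        have := (hint.comp_sub_left x)
        simpa using this
      exact this.mul_const C
    have hbound : ∀ᵐ y : (Fin d → ℝ), ‖a (x - y) * τ y η * Q y η‖ ≤ a (x - y) * C := by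
      filter_upwards with y
      have hτ1 := (hτ y η).1
      have hτ2 := (hτ y η).2
      rw [Real.norm_eq_abs, abs_mul, abs_mul, abs_of_nonneg (ha _), abs_of_nonneg hτ1]
      calc a (x - y) * τ y η * |Q y η|
          ≤ a (x - y) * 1 * C := by
            exact mul_le_mul (mul_le_mul_of_nonneg_left hτ2 (ha _)) (hQ y η) (abs_nonneg _)
              (mul_nonneg (ha _) zero_le_one)
        _ = a (x - y) * C := by ring
    have := norm_integral_le_of_norm_le hgint hbound
    rw [Real.norm_eq_abs] at this
    calc |∫ y, a (x - y) * τ y η * Q y η|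
        ≤ ∫ y, a (x - y) * C := this
      _ = (∫ y, a (x - y)) * C := by rw [integral_mul_const]
      _ = α * C := by rw [integral_sub_left_eq_self a volume x, hα]
  -- part 1
  have part1 : ∀ η : Finset (Fin d → ℝ),
      |Lk η| ≤ 2 * α * nk * η.card * Real.exp (ϑ'' * η.card) * E := by
    intro η
    rw [hLk η]
    set C : ℝ := nk * Real.exp (ϑ'' * η.card) * E with hC
    have h1 : |∑ y ∈ η, ∫ x, a (x - y) * τ y (insert x (η.erase y)) *
        Q y (insert x (η.erase y))| ≤ η.card * (α * C) := by
      calc |∑ y ∈ η, ∫ x, a (x - y) * τ y (insert x (η.erase y)) *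
            Q y (insert x (η.erase y))|
          ≤ ∑ y ∈ η, |∫ x, a (x - y) * τ y (insert x (η.erase y)) *
            Q y (insert x (η.erase y))| := Finset.abs_sum_le_sum_abs _ _
        _ ≤ ∑ _y ∈ η, α * C := Finset.sum_le_sum fun y hy => key1 η y hy
        _ = η.card * (α * C) := by rw [Finset.sum_const, nsmul_eq_mul]
    have h2 : |∑ x ∈ η, ∫ y, a (x - y) * τ y η * Q y η| ≤ η.card * (α * C) := by
      calc |∑ x ∈ η, ∫ y, a (x - y) * τ y η * Q y η|
          ≤ ∑ x ∈ η, |∫ y, a (x - y) * τ y η * Q y η| := Finset.abs_sum_le_sum_abs _ _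
        _ ≤ ∑ _x ∈ η, α * C := Finset.sum_le_sum fun x _ => key2 η x
        _ = η.card * (α * C) := by rw [Finset.sum_const, nsmul_eq_mul]
    calc |(∑ y ∈ η, ∫ x, a (x - y) * τ y (insert x (η.erase y)) *
          Q y (insert x (η.erase y))) - ∑ x ∈ η, ∫ y, a (x - y) * τ y η * Q y η|
        ≤ |∑ y ∈ η, ∫ x, a (x - y) * τ y (insert x (η.erase y)) *
          Q y (insert x (η.erase y))| + |∑ x ∈ η, ∫ y, a (x - y) * τ y η * Q y η| :=
          abs_sub _ _
      _ ≤ η.card * (α * C) + η.card * (α * C) := add_le_add h1 h2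
      _ = 2 * α * nk * η.card * Real.exp (ϑ'' * η.card) * E := by rw [hC]; ring
  refine ⟨part1, ?_⟩
  intro ϑ hϑ
  apply ciSup_le
  intro η
  set n : ℝ := (η.card : ℝ) with hn
  have hn0 : 0 ≤ n := Nat.cast_nonneg _
  have hσ : 0 < ϑ - ϑ'' := sub_pos.2 hϑ
  -- key elementary inequality : n * exp (-(ϑ - ϑ'') * n) ≤ 1 / (e * (ϑ - ϑ''))
  have helem : n * Real.exp (-((ϑ - ϑ'') * n)) ≤ 1 / (Real.exp 1 * (ϑ - ϑ'')) := by
    have he1 : (0:ℝ) < Real.exp 1 := Real.exp_pos _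
    have hepos : (0:ℝ) < Real.exp ((ϑ - ϑ'') * n) := Real.exp_pos _
    have ht : (ϑ - ϑ'') * n * Real.exp 1 ≤ Real.exp ((ϑ - ϑ'') * n) := by
      have h := Real.add_one_le_exp ((ϑ - ϑ'') * n - 1)
      have h2 : Real.exp ((ϑ - ϑ'') * n - 1) * Real.exp 1 = Real.exp ((ϑ - ϑ'') * n) := by
        rw [← Real.exp_add]; congr 1; ring
      nlinarith [he1]
    rw [Real.exp_neg, ← div_eq_mul_inv, div_le_div_iff₀ hepos (by positivity)]
    nlinarith [ht]
  have h1 := part1 η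
  have hcoef : 0 ≤ 2 * α * nk * E := by positivity
  calc |Lk η| * Real.exp (-(ϑ * n))
      ≤ (2 * α * nk * n * Real.exp (ϑ'' * n) * E) * Real.exp (-(ϑ * n)) := by
        apply mul_le_mul_of_nonneg_right h1 (Real.exp_pos _).le
    _ = (2 * α * nk * E) * (n * Real.exp (-((ϑ - ϑ'') * n))) := by
        rw [show Real.exp (-((ϑ - ϑ'') * n)) = Real.exp (ϑ'' * n) * Real.exp (-(ϑ * n)) from by
          rw [← Real.exp_add]; congr 1; ring]
        ring
    _ ≤ (2 * α * nk * E) * (1 / (Real.exp 1 * (ϑ - ϑ''))) :=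
        mul_le_mul_of_nonneg_left helem hcoef
    _ = (2 * α * nk / (Real.exp 1 * (ϑ - ϑ''))) * E := by ring
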